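/- Let 0 < p < 1 and let a be a p-atom on G x G supported on I_N x I_N. For (x,y) in the complement of I_N times the complement of I_N and any n, the quadratical partial sum factorizes as S_{n,n}a(x,y) = w_n(x+y) · (sum_{i=0}^{N-1} n_i w_{2^i}(x) D_{2^i}(x)) · (sum_{j=0}^{N-1} n_j w_{2^j}(y) D_{2^j}(y)) · hat{Phi}(n), where Phi(tau) = integral_{I_N} a(t + tau, t) d mu(t) and hat{Phi}(n) is its n-th Walsh-Fourier coefficient. -/

import Mathlib

open MeasureTheory

noncomputable section

/-- The Walsh group: countable product of `ZMod 2`. -/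
abbrev G : Type := ℕ → ZMod 2

instance : MeasurableSpace (ZMod 2) := ⊤

/-- Walsh-Paley function `w n`. -/
def walsh (n : ℕ) (x : G) : ℝ :=
  ∏ k ∈ Finset.range (n + 1), if n.testBit k ∧ x k = 1 then -1 else 1

/-- Walsh-Dirichlet kernel `D n`. -/
def dirichlet (n : ℕ) (x : G) : ℝ := ∑ k ∈ Finset.range n, walsh k x

/-- Dyadic interval `I_n` (centered at `0`). -/
def Icyl (n : ℕ) : Set G := {x : G | ∀ k < n, x k = 0}

/-- `μ` is the normalized Haar (fair-coin product) measure on `G`: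
it gives each cylinder of depth `n` measure `2⁻ⁿ`. -/
def IsStdHaar (μ : Measure G) : Prop :=
  ∀ (n : ℕ) (x : G), μ {y : G | ∀ k < n, y k = x k} = 2⁻¹ ^ n


/-- A `p`-atom supported on the square `I_N × I_N`. -/
def IsPAtom (μ : Measure G) (p : ℝ) (N : ℕ) (a : G × G → ℝ) : Prop :=
  Measurable a ∧
    (∀ z : G × G, z ∉ Icyl N ×ˢ Icyl N → a z = 0) ∧
    (∫ z, a z ∂(μ.prod μ)) = 0 ∧
    ∀ z, |a z| ≤ (2 : ℝ) ^ ((2 * N : ℝ) / p)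

/-- Two-dimensional Walsh-Fourier coefficient. -/
def fourierCoef (μ : Measure G) (a : G × G → ℝ) (i j : ℕ) : ℝ :=
  ∫ z, a z * walsh i z.1 * walsh j z.2 ∂(μ.prod μ)

/-- Quadratical partial sum `S_{n,n} a` of the two-dimensional Walsh-Fourier series. -/
def sqPartialSum (μ : Measure G) (a : G × G → ℝ) (n : ℕ) (z : G × G) : ℝ :=
  ∑ i ∈ Finset.range n, ∑ j ∈ Finset.range n,
    fourierCoef μ a i j * walsh i z.1 * walsh j z.2

lemma zmod2_cases (a : ZMod 2) : a = 0 ∨ a = 1 := by revert a; decide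

lemma walsh_eq_prod (n : ℕ) (x : G) {M : ℕ} (hM : n + 1 ≤ M) :
    walsh n x = ∏ k ∈ Finset.range M, if n.testBit k ∧ x k = 1 then (-1:ℝ) else 1 := by
  unfold walsh
  apply Finset.prod_subset (Finset.range_subset_range.2 hM)
  intro k _ hk
  simp only [Finset.mem_range, not_lt] at hk
  have hb : n.testBit k = false := Nat.testBit_lt_two_pow
    (lt_of_lt_of_le (Nat.lt_two_pow_self (n := n)) (Nat.pow_le_pow_right (by norm_num) (by omega)))
  simp [hb]

lemma walsh_add (n : ℕ) (x y : G) : walsh n (x + y) = walsh n x * walsh n y := by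
  unfold walsh
  rw [← Finset.prod_mul_distrib]
  apply Finset.prod_congr rfl
  intro k _
  have hxy : (x + y) k = x k + y k := rfl
  by_cases hb : n.testBit k
  · simp only [hb, true_and, hxy]
    rcases zmod2_cases (x k) with h | h <;> rcases zmod2_cases (y k) with h' | h' <;>
      simp [h, h'] <;> decide
  · simp [hb]

lemma walsh_abs (n : ℕ) (x : G) : |walsh n x| = 1 := by
  unfold walsh
  rw [Finset.abs_prod]
  apply Finset.prod_eq_one
  intro k _
  split_ifs <;> norm_num

lemma walsh_sq (n : ℕ) (x : G) : walsh n x * walsh n x = 1 := by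
  have h := walsh_abs n x
  rcases abs_eq (by norm_num : (0:ℝ) ≤ 1) |>.1 h with h' | h' <;> rw [h'] <;> norm_num

lemma walsh_xor (m n : ℕ) (x : G) : walsh (m ^^^ n) x = walsh m x * walsh n x := by
  set M := 2 ^ (m + n + 1) with hMdef
  have hmM : m + 1 ≤ M := Nat.lt_of_lt_of_le (Nat.lt_two_pow_self (n := m))
    (Nat.pow_le_pow_right (by norm_num) (by omega))
  have hnM : n + 1 ≤ M := Nat.lt_of_lt_of_le (Nat.lt_two_pow_self (n := n))
    (Nat.pow_le_pow_right (by norm_num) (by omega))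
  have hxM : (m ^^^ n) + 1 ≤ M := by
    have : m ^^^ n < 2 ^ (m + n + 1) := Nat.xor_lt_two_pow
      (lt_of_lt_of_le (Nat.lt_two_pow_self (n := m)) (Nat.pow_le_pow_right (by norm_num) (by omega)))
      (lt_of_lt_of_le (Nat.lt_two_pow_self (n := n)) (Nat.pow_le_pow_right (by norm_num) (by omega)))
    omega
  rw [walsh_eq_prod m x hmM, walsh_eq_prod n x hnM, walsh_eq_prod _ x hxM,
    ← Finset.prod_mul_distrib]
  apply Finset.prod_congr rfl
  intro k _
  have ht : (m ^^^ n).testBit k = ((m.testBit k).xor (n.testBit k)) := Nat.testBit_xor m n k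
  by_cases h1 : m.testBit k <;> by_cases h2 : n.testBit k <;>
    rcases zmod2_cases (x k) with h | h <;>
    simp [ht, h1, h2, h] <;> decide

lemma walsh_two_pow (j : ℕ) (x : G) : walsh (2 ^ j) x = if x j = 1 then -1 else 1 := by
  unfold walsh
  rw [Finset.prod_eq_single_of_mem j (Finset.mem_range.2 (by
    have := Nat.lt_two_pow_self (n := j); omega))]
  · simp
  · intro k _ hk
    simp [Nat.testBit_two_pow_of_ne (Ne.symm hk)]

lemma two_pow_add_eq_xor {j k : ℕ} (h : k < 2 ^ j) : 2 ^ j + k = 2 ^ j ^^^ k := by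
  apply Nat.eq_of_testBit_eq
  intro i
  rcases lt_trichotomy i j with hij | rfl | hij
  · rw [Nat.testBit_two_pow_add_gt hij, Nat.testBit_xor,
      Nat.testBit_two_pow_of_ne (by omega)]
    simp
  · rw [Nat.testBit_two_pow_add_eq, Nat.testBit_xor, Nat.testBit_two_pow_self,
      Nat.testBit_lt_two_pow h]
    simp [Nat.testBit_lt_two_pow h]
  · have h1 : 2 ^ j + k < 2 ^ i := by
      calc 2 ^ j + k < 2 ^ j + 2 ^ j := by omega
      _ = 2 ^ (j + 1) := by ring
      _ ≤ 2 ^ i := Nat.pow_le_pow_right (by norm_num) (by omega)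
    rw [Nat.testBit_lt_two_pow h1, Nat.testBit_xor,
      Nat.testBit_two_pow_of_ne (by omega),
      Nat.testBit_lt_two_pow (by calc k < 2^j := h
        _ ≤ 2 ^ i := Nat.pow_le_pow_right (by norm_num) (by omega))]
    simp

lemma walsh_two_pow_add {j k : ℕ} (h : k < 2 ^ j) (x : G) :
    walsh (2 ^ j + k) x = walsh (2 ^ j) x * walsh k x := by
  rw [two_pow_add_eq_xor h, walsh_xor]

lemma dirichlet_two_pow (j : ℕ) (x : G) :
    dirichlet (2 ^ j) x = if ∀ k < j, x k = 0 then (2 ^ j : ℝ) else 0 := by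
  induction j with
  | zero =>
    simp only [pow_zero, dirichlet, Finset.range_one, Finset.sum_singleton]
    rw [if_pos (by omega)]
    unfold walsh
    simp
  | succ j ih =>
    have hsplit : dirichlet (2 ^ (j + 1)) x
        = dirichlet (2 ^ j) x + ∑ k ∈ Finset.range (2 ^ j), walsh (2 ^ j + k) x := by
      unfold dirichlet
      rw [show 2 ^ (j+1) = 2 ^ j + 2 ^ j by ring]
      rw [Finset.sum_range_add]
    rw [hsplit]
    have : ∑ k ∈ Finset.range (2 ^ j), walsh (2 ^ j + k) x
        = walsh (2 ^ j) x * dirichlet (2 ^ j) x := by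
      unfold dirichlet
      rw [Finset.mul_sum]
      apply Finset.sum_congr rfl
      intro k hk
      exact walsh_two_pow_add (Finset.mem_range.1 hk) x
    rw [this, walsh_two_pow, ih]
    by_cases hxj1 : x j = 1
    · have hfalse : ¬ (∀ k < j + 1, x k = 0) := fun hcon => by
        have := hcon j (Nat.lt_succ_self j); rw [hxj1] at this; exact absurd this (by decide)
      rw [if_pos hxj1, if_neg hfalse]
      split_ifs <;> ring
    · have hxj0 : x j = 0 := by
        rcases zmod2_cases (x j) with h | h
        · exact h
        · exact absurd h hxj1
      rw [if_neg hxj1]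
      by_cases hall : ∀ k < j, x k = 0
      · rw [if_pos hall, if_pos (fun k hk => by
          rcases Nat.lt_succ_iff_lt_or_eq.1 hk with h | h
          · exact hall k h
          · subst h; exact hxj0)]
        ring
      · rw [if_neg hall, if_neg (fun hcon => hall fun k hk => hcon k (by omega))]
        ring

lemma walsh_eq_one_of_small {m j : ℕ} (hm : m < 2 ^ j) {x : G} (hx : ∀ k < j, x k = 0) :
    walsh m x = 1 := by
  unfold walsh
  apply Finset.prod_eq_one
  intro k _
  by_cases hb : m.testBit k
  · have hkj : k < j := by
      by_contra hk
      have : m < 2 ^ k := lt_of_lt_of_le hm (Nat.pow_le_pow_right (by norm_num) (by omega))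
      rw [Nat.testBit_lt_two_pow this] at hb; exact absurd hb (by simp)
    have hx0 : x k = 0 := hx k hkj
    have : ¬ (m.testBit k = true ∧ x k = 1) := fun hcon => by
      rw [hx0] at hcon; exact absurd hcon.2 (by decide)
    rw [if_neg this]
  · simp [hb]

/-- Sum of bit-terms is stable under enlarging the range past all bits. -/
lemma sum_bits_congr (f : ℕ → ℝ) (m R S : ℕ) (hR : ∀ i, m.testBit i → i < R)
    (hS : ∀ i, m.testBit i → i < S) :
    (∑ i ∈ Finset.range R, if m.testBit i then f i else 0)
      = ∑ i ∈ Finset.range S, if m.testBit i then f i else 0 := by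
  have key : ∀ T U : ℕ, T ≤ U → (∀ i, m.testBit i → i < T) →
      (∑ i ∈ Finset.range U, if m.testBit i then f i else 0)
        = ∑ i ∈ Finset.range T, if m.testBit i then f i else 0 := by
    intro T U hTU hT
    symm
    apply Finset.sum_subset (Finset.range_subset_range.2 hTU)
    intro i _ hi
    simp only [Finset.mem_range, not_lt] at hi
    rw [if_neg (fun hb => by have := hT i hb; omega)]
  exact (key R (max R S) (le_max_left _ _) hR).symm.trans (key S (max R S) (le_max_right _ _) hS)

lemma testBit_lt {m i : ℕ} (h : m.testBit i) : i < m := by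
  by_contra hc
  have : m < 2 ^ i := lt_of_lt_of_le (Nat.lt_two_pow_self (n := m))
    (Nat.pow_le_pow_right (by norm_num) (by omega))
  rw [Nat.testBit_lt_two_pow this] at h
  exact absurd h (by simp)

lemma dirichlet_rep (n : ℕ) (x : G) :
    dirichlet n x = walsh n x *
      ∑ i ∈ Finset.range n, if n.testBit i then walsh (2 ^ i) x * dirichlet (2 ^ i) x else 0 := by
  induction n using Nat.strong_induction_on with
  | _ n ih =>
    match n with
    | 0 => simp [dirichlet]
    | (n + 1) =>
      set n' := n + 1 with hn'
      have hne : n' ≠ 0 := by omega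
      set j := n'.log2 with hj
      have h2j : 2 ^ j ≤ n' := Nat.log2_self_le hne
      have h2j' : n' < 2 ^ (j + 1) := Nat.lt_log2_self
      set m := n' - 2 ^ j with hm
      have hmn : n' = 2 ^ j + m := by omega
      have hmlt : m < 2 ^ j := by
        have : 2 ^ (j+1) = 2 ^ j + 2 ^ j := by ring
        omega
      have hmn' : m < n' := by have := Nat.two_pow_pos j; omega
      -- split the Dirichlet sum
      have hsplit : dirichlet n' x = dirichlet (2 ^ j) x + walsh (2 ^ j) x * dirichlet m x := by
        unfold dirichlet
        rw [hmn, Finset.sum_range_add, Finset.mul_sum]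
        congr 1
        apply Finset.sum_congr rfl
        intro k hk
        exact walsh_two_pow_add (lt_trans (Finset.mem_range.1 hk) hmlt) x
      -- walsh n'
      have hwn : walsh n' x = walsh (2 ^ j) x * walsh m x := by
        rw [hmn, walsh_two_pow_add hmlt]
      -- bit sum
      have hbit_lt : ∀ i, n'.testBit i → i < j + 1 := by
        intro i hb
        by_contra hc
        rw [Nat.testBit_lt_two_pow (lt_of_lt_of_le h2j'
          (Nat.pow_le_pow_right (by norm_num) (by omega)))] at hb
        exact absurd hb (by simp)
      have hbit_m : ∀ i, m.testBit i → i < j := by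
        intro i hb
        by_contra hc
        rw [Nat.testBit_lt_two_pow (lt_of_lt_of_le hmlt
          (Nat.pow_le_pow_right (by norm_num) (by omega)))] at hb
        exact absurd hb (by simp)
      have hbit_eq : ∀ i < j, n'.testBit i = m.testBit i := by
        intro i hij
        rw [hmn]
        exact Nat.testBit_two_pow_add_gt hij m
      have hbit_j : n'.testBit j = true := by
        rw [hmn, Nat.testBit_two_pow_add_eq, Nat.testBit_lt_two_pow hmlt]
        simp
      set f : ℕ → ℝ := fun i => walsh (2 ^ i) x * dirichlet (2 ^ i) x with hf
      have hsum : (∑ i ∈ Finset.range n', if n'.testBit i then f i else 0)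
          = (∑ i ∈ Finset.range j, if m.testBit i then f i else 0)
            + f j := by
        rw [sum_bits_congr f n' n' (j+1) (fun i hb => testBit_lt hb) hbit_lt,
          Finset.sum_range_succ, hbit_j, if_pos rfl]
        congr 1
        apply Finset.sum_congr rfl
        intro i hi
        rw [hbit_eq i (Finset.mem_range.1 hi)]
      have hsum_m : (∑ i ∈ Finset.range j, if m.testBit i then f i else 0)
          = ∑ i ∈ Finset.range m, if m.testBit i then f i else 0 :=
        sum_bits_congr f m j m hbit_m (fun i hb => testBit_lt hb)
      -- the claim walsh m x * dirichlet (2^j) x = dirichlet (2^j) x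
      have hclaim : walsh m x * dirichlet (2 ^ j) x = dirichlet (2 ^ j) x := by
        by_cases hI : ∀ k < j, x k = 0
        · rw [walsh_eq_one_of_small hmlt hI, one_mul]
        · rw [dirichlet_two_pow, if_neg hI, mul_zero]
      have hIH := ih m hmn'
      rw [hsplit, hsum, hwn]
      have hsq := walsh_sq (2 ^ j) x
      calc dirichlet (2 ^ j) x + walsh (2 ^ j) x * dirichlet m x
          = walsh m x * dirichlet (2 ^ j) x + walsh (2 ^ j) x *
            (walsh m x * ∑ i ∈ Finset.range m, if m.testBit i then f i else 0) := by
            rw [hclaim, ← hIH]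
        _ = (walsh (2 ^ j) x * walsh (2 ^ j) x) * (walsh m x * dirichlet (2 ^ j) x)
            + walsh (2 ^ j) x * (walsh m x *
              ∑ i ∈ Finset.range m, if m.testBit i then f i else 0) := by
            rw [hsq, one_mul]
        _ = walsh (2 ^ j) x * walsh m x *
            ((∑ i ∈ Finset.range m, if m.testBit i then f i else 0) + walsh (2 ^ j) x * dirichlet (2 ^ j) x) := by
            ring
        _ = walsh (2 ^ j) x * walsh m x *
            ((∑ i ∈ Finset.range j, if m.testBit i then f i else 0) + f j) := by
            rw [hsum_m]

lemma dirichlet_rep' {N : ℕ} {x s : G} (hx : x ∉ Icyl N) (hs : s ∈ Icyl N) (n : ℕ) :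
    dirichlet n (x + s) = walsh n x * walsh n s *
      ∑ i ∈ Finset.range N, if n.testBit i then walsh (2 ^ i) x * dirichlet (2 ^ i) x else 0 := by
  have hs' : ∀ k < N, s k = 0 := hs
  have hx' : ¬ ∀ k < N, x k = 0 := hx
  have hD0 : ∀ i, N ≤ i → dirichlet (2 ^ i) x = 0 := by
    intro i hi
    rw [dirichlet_two_pow, if_neg]
    intro hcon
    exact hx' fun k hk => hcon k (lt_of_lt_of_le hk hi)
  have hterm : ∀ i, (if n.testBit i then walsh (2 ^ i) (x + s) * dirichlet (2 ^ i) (x + s) else 0)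
      = (if n.testBit i then walsh (2 ^ i) x * dirichlet (2 ^ i) x else 0) := by
    intro i
    by_cases hb : n.testBit i
    · rw [if_pos hb, if_pos hb]
      by_cases hiN : i < N
      · have hw : walsh (2 ^ i) (x + s) = walsh (2 ^ i) x := by
          rw [walsh_add, walsh_two_pow i s,
            if_neg (by rw [hs' i hiN]; decide), mul_one]
        have hd : dirichlet (2 ^ i) (x + s) = dirichlet (2 ^ i) x := by
          rw [dirichlet_two_pow, dirichlet_two_pow]
          have : (∀ k < i, (x + s) k = 0) ↔ (∀ k < i, x k = 0) := by
            constructor <;> intro h k hk <;> have h1 := h k hk <;>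
              have h2 := hs' k (lt_trans hk hiN) <;>
              have hxs : (x + s) k = x k + s k := rfl
            · rw [hxs, h2, add_zero] at h1; exact h1
            · rw [hxs, h1, h2, add_zero]
          by_cases hc : ∀ k < i, x k = 0
          · rw [if_pos hc, if_pos (this.2 hc)]
          · rw [if_neg hc, if_neg (fun hcon => hc (this.1 hcon))]
        rw [hw, hd]
      · have h1 : dirichlet (2 ^ i) (x + s) = 0 := by
          rw [dirichlet_two_pow, if_neg]
          intro hcon
          apply hx'
          intro k hk
          have h2 := hcon k (lt_of_lt_of_le hk (not_lt.1 hiN))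
          have hxs : (x + s) k = x k + s k := rfl
          rw [hxs, hs' k hk, add_zero] at h2
          exact h2
        rw [h1, hD0 i (not_lt.1 hiN), mul_zero, mul_zero]
    · rw [if_neg hb, if_neg hb]
  rw [dirichlet_rep n (x + s), walsh_add]
  congr 1
  set g : ℕ → ℝ := fun i => if n.testBit i then walsh (2 ^ i) x * dirichlet (2 ^ i) x else 0 with hg
  have e0 : (∑ i ∈ Finset.range n,
      if n.testBit i then walsh (2 ^ i) (x + s) * dirichlet (2 ^ i) (x + s) else 0)
      = ∑ i ∈ Finset.range n, g i := Finset.sum_congr rfl fun i _ => hterm i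
  have hgz : ∀ i, N ≤ i → g i = 0 := by
    intro i hi
    rw [hg]
    by_cases hb : n.testBit i
    · simp only [hb, if_true, hD0 i hi, mul_zero]
    · simp [hb]
  have e1 : (∑ i ∈ Finset.range n, g i) = ∑ i ∈ Finset.range (n + N), g i := by
    apply Finset.sum_subset (Finset.range_subset_range.2 (by omega))
    intro i _ hi
    simp only [Finset.mem_range, not_lt] at hi
    have hb : n.testBit i = false := Nat.testBit_lt_two_pow
      (lt_of_lt_of_le (Nat.lt_two_pow_self (n := n)) (Nat.pow_le_pow_right (by norm_num) hi))
    simp [hg, hb]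
  have e2 : (∑ i ∈ Finset.range N, g i) = ∑ i ∈ Finset.range (n + N), g i := by
    apply Finset.sum_subset (Finset.range_subset_range.2 (by omega))
    intro i _ hi
    simp only [Finset.mem_range, not_lt] at hi
    exact hgz i hi
  rw [e0, e1, ← e2]

/-! ### Measure-theoretic lemmas -/

lemma G_add_add (c y : G) : c + (c + y) = y := funext fun k => by
  have h : ∀ a b : ZMod 2, a + (a + b) = b := by decide
  exact h _ _

lemma G_add_add' (t τ : G) : t + τ + t = τ := funext fun k => by
  have h : ∀ a b : ZMod 2, a + b + a = b := by decide
  exact h _ _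

lemma measurable_const_add_G (c : G) : Measurable (fun y : G => c + y) :=
  measurable_pi_lambda _ fun k =>
    (measurable_from_top (f := fun v : ZMod 2 => c k + v)).comp (measurable_pi_apply k)

def transEquiv (c : G) : G ≃ᵐ G :=
  ⟨⟨fun y => c + y, fun y => c + y, G_add_add c, G_add_add c⟩,
    measurable_const_add_G c, measurable_const_add_G c⟩

def CylSets : Set (Set G) := {S | ∃ (n : ℕ) (x : G), S = {y : G | ∀ k < n, y k = x k}}

lemma measurableSet_cyl (n : ℕ) (x : G) : MeasurableSet {y : G | ∀ k < n, y k = x k} := by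
  have h : {y : G | ∀ k < n, y k = x k}
      = ⋂ (k : ℕ) (_ : k < n), (fun y : G => y k) ⁻¹' {x k} := by
    ext y; simp
  rw [h]
  exact MeasurableSet.iInter fun k => MeasurableSet.iInter fun _ =>
    (measurable_pi_apply k) trivial

lemma measurableSet_Icyl (n : ℕ) : MeasurableSet (Icyl n) := measurableSet_cyl n 0

lemma generateFrom_cyl :
    (inferInstance : MeasurableSpace G) = MeasurableSpace.generateFrom CylSets := by
  apply le_antisymm
  · have h : ∀ k : ℕ, Measurable[MeasurableSpace.generateFrom CylSets] (fun y : G => y k) := by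
      intro k
      apply @measurable_to_countable' (ZMod 2) G _ _ (MeasurableSpace.generateFrom CylSets)
      intro c
      have heq : (fun y : G => y k) ⁻¹' {c} =
          ⋃ (v : Fin (k + 1) → ZMod 2) (_ : v ⟨k, Nat.lt_succ_self k⟩ = c),
            {y : G | ∀ i < k + 1, y i = (fun i => if h : i < k + 1 then v ⟨i, h⟩ else 0) i} := by
        ext y
        simp only [Set.mem_preimage, Set.mem_singleton_iff, Set.mem_iUnion, Set.mem_setOf_eq]
        constructor
        · intro hy
          refine ⟨fun i => y i, hy, fun i hi => ?_⟩
          rw [dif_pos hi]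
        · rintro ⟨v, hv, hmem⟩
          have h1 := hmem k (Nat.lt_succ_self k)
          rw [dif_pos (Nat.lt_succ_self k)] at h1
          rw [h1, hv]
      rw [heq]
      exact MeasurableSet.iUnion fun v => MeasurableSet.iUnion fun _ =>
        MeasurableSpace.measurableSet_generateFrom ⟨k + 1, _, rfl⟩
    exact iSup_le fun k => measurable_iff_comap_le.1 (h k)
  · exact MeasurableSpace.generateFrom_le (by
      rintro S ⟨n, x, rfl⟩; exact measurableSet_cyl n x)

lemma isPiSystem_cyl : IsPiSystem CylSets := by
  rintro S ⟨n, x, rfl⟩ T ⟨m, x', rfl⟩ hne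
  obtain ⟨z, hz⟩ := hne
  obtain ⟨hz1, hz2⟩ := hz
  rcases le_total n m with h | h
  · refine ⟨m, x', ?_⟩
    ext y
    constructor
    · rintro ⟨_, h2⟩; exact h2
    · intro hy
      refine ⟨fun k hk => ?_, hy⟩
      exact (hy k (lt_of_lt_of_le hk h)).trans
        ((hz2 k (lt_of_lt_of_le hk h)).symm.trans (hz1 k hk))
  · refine ⟨n, x, ?_⟩
    ext y
    constructor
    · rintro ⟨h1, _⟩; exact h1
    · intro hy
      refine ⟨hy, fun k hk => ?_⟩
      exact (hy k (lt_of_lt_of_le hk h)).trans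
        ((hz1 k (lt_of_lt_of_le hk h)).symm.trans (hz2 k hk))

section Haar
variable {μ : Measure G}

lemma isProb (hμ : IsStdHaar μ) : IsProbabilityMeasure μ :=
  ⟨by have := hμ 0 0; simpa using this⟩

lemma map_add_eq (hμ : IsStdHaar μ) (c : G) : μ.map (fun y => c + y) = μ := by
  haveI := isProb hμ
  symm
  apply MeasureTheory.ext_of_generate_finite CylSets generateFrom_cyl isPiSystem_cyl
  · rintro S ⟨n, x, rfl⟩
    rw [Measure.map_apply (measurable_const_add_G c) (measurableSet_cyl n x)]
    have hpre : (fun y : G => c + y) ⁻¹' {y : G | ∀ k < n, y k = x k}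
        = {y : G | ∀ k < n, y k = (c + x) k} := by
      ext y
      simp only [Set.mem_preimage, Set.mem_setOf_eq]
      constructor <;> intro h k hk
      · have h1 : c k + y k = x k := h k hk
        have hz : ∀ a b d : ZMod 2, a + b = d → b = a + d := by decide
        exact hz _ _ _ h1
      · show c k + y k = x k
        rw [h k hk]
        show c k + (c k + x k) = x k
        have hz : ∀ a b : ZMod 2, a + (a + b) = b := by decide
        exact hz _ _
    rw [hμ n x, hpre, hμ n (c + x)]
  · rw [Measure.map_apply (measurable_const_add_G c) MeasurableSet.univ]
    simp

lemma integral_translate (hμ : IsStdHaar μ) (c : G) (f : G → ℝ) :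
    ∫ τ, f (c + τ) ∂μ = ∫ s, f s ∂μ := by
  have h1 : ∫ τ, f (c + τ) ∂μ = ∫ y, f y ∂(Measure.map (transEquiv c) μ) :=
    (MeasureTheory.integral_map_equiv (transEquiv c) f).symm
  have hcoe : ⇑(transEquiv c) = fun y : G => c + y := rfl
  rw [h1, hcoe, map_add_eq hμ c]

end Haar

lemma measurable_walsh (n : ℕ) : Measurable (walsh n) := by
  unfold walsh
  apply Finset.measurable_prod
  intro k _
  exact (measurable_from_top
    (f := fun v : ZMod 2 => if n.testBit k ∧ v = 1 then (-1 : ℝ) else 1)).comp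
    (measurable_pi_apply k)

lemma measurable_dirichlet (n : ℕ) : Measurable (dirichlet n) := by
  unfold dirichlet
  exact Finset.measurable_sum _ fun k _ => measurable_walsh k

lemma integrable_of_bdd {π : Measure (G × G)} [IsFiniteMeasure π] {f : G × G → ℝ}
    (hf : Measurable f) {C : ℝ} (hC : ∀ z, |f z| ≤ C) : Integrable f π :=
  (integrable_const C).mono' hf.aestronglyMeasurable
    (Filter.Eventually.of_forall fun z => by simpa [Real.norm_eq_abs] using hC z)

/-- Factorization of `S_{n,n} a` on `I_N^c × I_N^c`. -/
theorem sqPartialSum_factorization (μ : Measure G) (hμ : IsStdHaar μ)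
    (p : ℝ) (hp0 : 0 < p) (hp1 : p < 1) (N : ℕ) (a : G × G → ℝ)
    (ha : IsPAtom μ p N a) (n : ℕ) (x y : G) (hx : x ∉ Icyl N) (hy : y ∉ Icyl N) :
    sqPartialSum μ a n (x, y) =
      walsh n (x + y) *
        (∑ i ∈ Finset.range N,
          if n.testBit i then walsh (2 ^ i) x * dirichlet (2 ^ i) x else 0) *
        (∑ j ∈ Finset.range N,
          if n.testBit j then walsh (2 ^ j) y * dirichlet (2 ^ j) y else 0) *
        (∫ τ, (∫ t in Icyl N, a (t + τ, t) ∂μ) * walsh n τ ∂μ) := by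
  obtain ⟨hameas, hsupp, _, habs⟩ := ha
  haveI : IsProbabilityMeasure μ := isProb hμ
  set B := (2 : ℝ) ^ ((2 * N : ℝ) / p) with hB
  set Ax := ∑ i ∈ Finset.range N,
    if n.testBit i then walsh (2 ^ i) x * dirichlet (2 ^ i) x else 0 with hAx
  set Ay := ∑ j ∈ Finset.range N,
    if n.testBit j then walsh (2 ^ j) y * dirichlet (2 ^ j) y else 0 with hAy
  have hint : ∀ i j : ℕ,
      Integrable (fun z : G × G => a z * walsh i z.1 * walsh j z.2) (μ.prod μ) := by
    intro i j
    apply integrable_of_bdd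
      ((hameas.mul ((measurable_walsh i).comp measurable_fst)).mul
        ((measurable_walsh j).comp measurable_snd)) (C := B)
    intro z
    calc |a z * walsh i z.1 * walsh j z.2| = |a z| * |walsh i z.1| * |walsh j z.2| := by
          rw [abs_mul, abs_mul]
      _ = |a z| := by rw [walsh_abs, walsh_abs, mul_one, mul_one]
      _ ≤ B := habs z
  -- Step 1: the partial sum as a single integral against Dirichlet kernels
  have hptwise : ∀ z : G × G, a z * dirichlet n (x + z.1) * dirichlet n (y + z.2)
      = ∑ i ∈ Finset.range n, ∑ j ∈ Finset.range n,
          (a z * walsh i z.1 * walsh j z.2) * (walsh i x * walsh j y) := by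
    intro z
    rw [show dirichlet n (x + z.1) = ∑ i ∈ Finset.range n, walsh i x * walsh i z.1 from by
        unfold dirichlet; exact Finset.sum_congr rfl fun i _ => walsh_add i x z.1,
      show dirichlet n (y + z.2) = ∑ j ∈ Finset.range n, walsh j y * walsh j z.2 from by
        unfold dirichlet; exact Finset.sum_congr rfl fun j _ => walsh_add j y z.2]
    rw [mul_assoc, Finset.sum_mul_sum, Finset.mul_sum]
    apply Finset.sum_congr rfl
    intro i _
    rw [Finset.mul_sum]
    apply Finset.sum_congr rfl
    intro j _
    ring
  have step1 : sqPartialSum μ a n (x, y)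
      = ∫ z, a z * dirichlet n (x + z.1) * dirichlet n (y + z.2) ∂(μ.prod μ) := by
    calc sqPartialSum μ a n (x, y)
        = ∑ i ∈ Finset.range n, ∑ j ∈ Finset.range n,
            ∫ z, (a z * walsh i z.1 * walsh j z.2) * (walsh i x * walsh j y) ∂(μ.prod μ) := by
          unfold sqPartialSum fourierCoef
          apply Finset.sum_congr rfl; intro i _
          apply Finset.sum_congr rfl; intro j _
          rw [integral_mul_const, mul_assoc]
      _ = ∫ z, ∑ i ∈ Finset.range n, ∑ j ∈ Finset.range n,
            (a z * walsh i z.1 * walsh j z.2) * (walsh i x * walsh j y) ∂(μ.prod μ) := by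
          rw [integral_finset_sum _ (fun i _ =>
            integrable_finset_sum _ (fun j _ => (hint i j).mul_const _))]
          apply Finset.sum_congr rfl
          intro i _
          rw [integral_finset_sum _ (fun j _ => (hint i j).mul_const _)]
      _ = ∫ z, a z * dirichlet n (x + z.1) * dirichlet n (y + z.2) ∂(μ.prod μ) :=
          integral_congr_ae (Filter.Eventually.of_forall fun z => (hptwise z).symm)
  -- Step 2: pointwise factorization on the support
  have step2 : ∀ z : G × G, a z * dirichlet n (x + z.1) * dirichlet n (y + z.2)
      = (a z * walsh n z.1 * walsh n z.2) * (walsh n x * walsh n y * Ax * Ay) := by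
    intro z
    by_cases hz : z ∈ Icyl N ×ˢ Icyl N
    · obtain ⟨hz1, hz2⟩ := hz
      rw [dirichlet_rep' hx hz1 n, dirichlet_rep' hy hz2 n, ← hAx, ← hAy]
      ring
    · rw [hsupp z hz]; ring
  have step3 : ∫ z, a z * dirichlet n (x + z.1) * dirichlet n (y + z.2) ∂(μ.prod μ)
      = (∫ z, a z * walsh n z.1 * walsh n z.2 ∂(μ.prod μ))
          * (walsh n x * walsh n y * Ax * Ay) := by
    rw [integral_congr_ae (Filter.Eventually.of_forall step2)]
    exact integral_mul_const _ _
  -- Step 4: the remaining integral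
  have hintF : Integrable (fun z : G × G => a z * walsh n (z.1 + z.2)) (μ.prod μ) := by
    apply integrable_of_bdd (f := fun z : G × G => a z * walsh n (z.1 + z.2))
      (hameas.mul ((measurable_walsh n).comp (measurable_fst.add measurable_snd))) (C := B)
    intro z
    rw [abs_mul, walsh_abs, mul_one]
    exact habs z
  have hswap2 : Integrable
      (Function.uncurry fun t τ : G => a (t + τ, t) * walsh n τ) (μ.prod μ) := by
    apply integrable_of_bdd
      (f := Function.uncurry fun t τ : G => a (t + τ, t) * walsh n τ)
      ((hameas.comp ((measurable_fst.add measurable_snd).prodMk measurable_fst)).mul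
        ((measurable_walsh n).comp measurable_snd)) (C := B)
    intro z
    show |a (z.1 + z.2, z.1) * walsh n z.2| ≤ B
    rw [abs_mul, walsh_abs, mul_one]
    exact habs _
  have step4 : ∫ z, a z * walsh n z.1 * walsh n z.2 ∂(μ.prod μ)
      = ∫ τ, (∫ t in Icyl N, a (t + τ, t) ∂μ) * walsh n τ ∂μ := by
    calc ∫ z, a z * walsh n z.1 * walsh n z.2 ∂(μ.prod μ)
        = ∫ z, a z * walsh n (z.1 + z.2) ∂(μ.prod μ) :=
          integral_congr_ae (Filter.Eventually.of_forall fun z => by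
            show a z * walsh n z.1 * walsh n z.2 = a z * walsh n (z.1 + z.2)
            rw [walsh_add]; ring)
      _ = ∫ s, ∫ t, a (s, t) * walsh n (s + t) ∂μ ∂μ := integral_prod _ hintF
      _ = ∫ t, ∫ s, a (s, t) * walsh n (s + t) ∂μ ∂μ := integral_integral_swap hintF
      _ = ∫ t, ∫ τ, a (t + τ, t) * walsh n τ ∂μ ∂μ := by
          apply integral_congr_ae (Filter.Eventually.of_forall ?_)
          intro t
          show (∫ s, a (s, t) * walsh n (s + t) ∂μ) = ∫ τ, a (t + τ, t) * walsh n τ ∂μ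
          rw [← integral_translate hμ t (fun s => a (s, t) * walsh n (s + t))]
          apply integral_congr_ae (Filter.Eventually.of_forall ?_)
          intro τ
          show a (t + τ, t) * walsh n (t + τ + t) = a (t + τ, t) * walsh n τ
          rw [G_add_add']
      _ = ∫ τ, ∫ t, a (t + τ, t) * walsh n τ ∂μ ∂μ := integral_integral_swap hswap2
      _ = ∫ τ, (∫ t, a (t + τ, t) ∂μ) * walsh n τ ∂μ := by
          apply integral_congr_ae (Filter.Eventually.of_forall ?_)
          intro τ
          show (∫ t, a (t + τ, t) * walsh n τ ∂μ) = (∫ t, a (t + τ, t) ∂μ) * walsh n τ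
          exact integral_mul_const _ _
      _ = ∫ τ, (∫ t in Icyl N, a (t + τ, t) ∂μ) * walsh n τ ∂μ := by
          apply integral_congr_ae (Filter.Eventually.of_forall ?_)
          intro τ
          show (∫ t, a (t + τ, t) ∂μ) * walsh n τ = (∫ t in Icyl N, a (t + τ, t) ∂μ) * walsh n τ
          congr 1
          exact (setIntegral_eq_integral_of_forall_compl_eq_zero
            (fun t ht => hsupp _ (fun hmem => ht hmem.2))).symm
  rw [step1, step3, step4, walsh_add n x y]
  ring


end
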